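/- The Rényi divergence is nondecreasing in its order: for discrete probability vectors p, q with q_i > 0 for all i, and 0 < α ≤ β with α, β ≠ 1, one has D_α(p‖q) ≤ D_β(p‖q). -/

import Mathlib

open Real

private lemma renyi_interp (n : ℕ) (p q : Fin n → ℝ)
    (hp0 : ∀ i, 0 ≤ p i) (hq0 : ∀ i, 0 < q i)
    (a b l : ℝ) (ha : 0 < a) (hb : 0 < b) (hl0 : 0 < l) (hl1 : l < 1) :
    ∑ i, p i ^ (l * a + (1 - l) * b) * q i ^ (1 - (l * a + (1 - l) * b)) ≤
      (∑ i, p i ^ a * q i ^ (1 - a)) ^ l * (∑ i, p i ^ b * q i ^ (1 - b)) ^ (1 - l) := by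
  have hconj : (l⁻¹).HolderConjugate (1 - l)⁻¹ := by
    rw [Real.holderConjugate_iff]
    constructor
    · exact one_lt_inv_iff₀.mpr ⟨hl0, hl1⟩
    · rw [inv_inv, inv_inv]; ring
  have hfn : ∀ i : Fin n, (0:ℝ) ≤ p i ^ a * q i ^ (1 - a) := fun i =>
    mul_nonneg (Real.rpow_nonneg (hp0 i) _) (Real.rpow_nonneg (hq0 i).le _)
  have hgn : ∀ i : Fin n, (0:ℝ) ≤ p i ^ b * q i ^ (1 - b) := fun i =>
    mul_nonneg (Real.rpow_nonneg (hp0 i) _) (Real.rpow_nonneg (hq0 i).le _)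
  have key := Real.inner_le_Lp_mul_Lq_of_nonneg (s := Finset.univ (α := Fin n))
      (f := fun i => (p i ^ a * q i ^ (1 - a)) ^ l)
      (g := fun i => (p i ^ b * q i ^ (1 - b)) ^ (1 - l)) hconj
      (fun i _ => Real.rpow_nonneg (hfn i) _) (fun i _ => Real.rpow_nonneg (hgn i) _)
  have h1 : ∀ i : Fin n, (p i ^ a * q i ^ (1 - a)) ^ l * (p i ^ b * q i ^ (1 - b)) ^ (1 - l)
      = p i ^ (l * a + (1 - l) * b) * q i ^ (1 - (l * a + (1 - l) * b)) := by
    intro i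
    rcases eq_or_lt_of_le (hp0 i) with h | h
    · have hc : (0:ℝ) < l * a + (1 - l) * b := by nlinarith
      rw [← h]
      simp [Real.zero_rpow ha.ne', Real.zero_rpow hc.ne', Real.zero_rpow hl0.ne']
    rw [Real.mul_rpow (Real.rpow_nonneg h.le _) (Real.rpow_nonneg (hq0 i).le _),
        Real.mul_rpow (Real.rpow_nonneg h.le _) (Real.rpow_nonneg (hq0 i).le _),
        ← Real.rpow_mul h.le, ← Real.rpow_mul (hq0 i).le,
        ← Real.rpow_mul h.le, ← Real.rpow_mul (hq0 i).le,
        show p i ^ (a * l) * q i ^ ((1 - a) * l) * (p i ^ (b * (1 - l)) * q i ^ ((1 - b) * (1 - l)))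
        = (p i ^ (a * l) * p i ^ (b * (1 - l))) * (q i ^ ((1 - a) * l) * q i ^ ((1 - b) * (1 - l)))
        from by ring,
        ← Real.rpow_add h, ← Real.rpow_add (hq0 i)]
    ring_nf
  have h2 : ∀ i : Fin n, ((p i ^ a * q i ^ (1 - a)) ^ l) ^ l⁻¹ = p i ^ a * q i ^ (1 - a) := by
    intro i; rw [← Real.rpow_mul (hfn i), mul_inv_cancel₀ hl0.ne', Real.rpow_one]
  have h3 : ∀ i : Fin n, ((p i ^ b * q i ^ (1 - b)) ^ (1 - l)) ^ (1 - l)⁻¹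
      = p i ^ b * q i ^ (1 - b) := by
    intro i; rw [← Real.rpow_mul (hgn i), mul_inv_cancel₀ (by linarith : (1:ℝ) - l ≠ 0),
      Real.rpow_one]
  simp only [h1, h2, h3, one_div, inv_inv] at key
  exact key

/-- The Rényi divergence is nondecreasing in its order: for probability
vectors `p`, `q` with `q` strictly positive and `0 < α ≤ β`, `α, β ≠ 1`,
`D_α(p‖q) ≤ D_β(p‖q)`. -/
theorem renyi_mono_order (n : ℕ) (p q : Fin n → ℝ)
    (hp0 : ∀ i, 0 ≤ p i) (hp1 : ∑ i, p i = 1)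
    (hq0 : ∀ i, 0 < q i) (hq1 : ∑ i, q i = 1)
    (α β : ℝ) (hα : 0 < α) (hαβ : α ≤ β) (hα1 : α ≠ 1) (hβ1 : β ≠ 1) :
    (α - 1)⁻¹ * Real.log (∑ i, p i ^ α * q i ^ (1 - α)) ≤
      (β - 1)⁻¹ * Real.log (∑ i, p i ^ β * q i ^ (1 - β)) := by
  rcases eq_or_lt_of_le hαβ with rfl | hlt
  · exact le_refl _
  have hβ : 0 < β := lt_trans hα hlt
  -- positivity of the sums
  have hex : ∃ i, 0 < p i := by
    by_contra hc
    push_neg at hc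
    have : ∑ i, p i = 0 := Finset.sum_eq_zero fun i _ => le_antisymm (hc i) (hp0 i)
    rw [hp1] at this; norm_num at this
  obtain ⟨i0, hi0⟩ := hex
  have Fpos : ∀ c : ℝ, 0 < c → 0 < ∑ i, p i ^ c * q i ^ (1 - c) := by
    intro c hc
    apply Finset.sum_pos'
    · exact fun i _ => mul_nonneg (Real.rpow_nonneg (hp0 i) _) (Real.rpow_nonneg (hq0 i).le _)
    · exact ⟨i0, Finset.mem_univ _, mul_pos (Real.rpow_pos_of_pos hi0 _)
        (Real.rpow_pos_of_pos (hq0 i0) _)⟩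
  have F1 : (∑ i, p i ^ (1:ℝ) * q i ^ (1 - (1:ℝ))) = 1 := by
    simp only [sub_self, Real.rpow_one, Real.rpow_zero, mul_one, hp1]
  set x := Real.log (∑ i, p i ^ α * q i ^ (1 - α)) with hx
  set y := Real.log (∑ i, p i ^ β * q i ^ (1 - β)) with hy
  -- convexity step
  have conv : ∀ a b l : ℝ, 0 < a → 0 < b → 0 < l → l < 1 →
      Real.log (∑ i, p i ^ (l * a + (1 - l) * b) * q i ^ (1 - (l * a + (1 - l) * b))) ≤
        l * Real.log (∑ i, p i ^ a * q i ^ (1 - a)) +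
          (1 - l) * Real.log (∑ i, p i ^ b * q i ^ (1 - b)) := by
    intro a b l ha hb hl0 hl1
    have h := renyi_interp n p q hp0 hq0 a b l ha hb hl0 hl1
    have h2 := Real.log_le_log (Fpos _ (by nlinarith)) h
    rwa [Real.log_mul (Real.rpow_pos_of_pos (Fpos a ha) _).ne' (Real.rpow_pos_of_pos (Fpos b hb) _).ne',
      Real.log_rpow (Fpos a ha), Real.log_rpow (Fpos b hb)] at h2
  rcases lt_trichotomy β 1 with hb1 | hb1 | hb1
  · -- α < β < 1, points (α, 1), weight l = (1-β)/(1-α)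
    have hden : (0:ℝ) < 1 - α := by linarith
    have key := conv α 1 ((1 - β) / (1 - α)) hα one_pos
      (div_pos (by linarith) hden) (by rw [div_lt_one hden]; linarith)
    have hcomb : (1 - β) / (1 - α) * α + (1 - (1 - β) / (1 - α)) * 1 = β := by
      field_simp; ring
    rw [hcomb, F1, Real.log_one, mul_zero, add_zero, ← hx, ← hy] at key
    -- key : y ≤ (1-β)/(1-α) * x ; goal : x/(α-1) ≤ y/(β-1), both denominators < 0
    rw [inv_mul_eq_div, inv_mul_eq_div, show α - 1 = -(1 - α) by ring,
      show β - 1 = -(1 - β) by ring, div_neg, div_neg, neg_le_neg_iff,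
      div_le_div_iff₀ (by linarith : (0:ℝ) < 1 - β) hden]
    rw [div_mul_eq_mul_div, le_div_iff₀ hden] at key
    linarith
  · exact absurd hb1 hβ1
  rcases lt_trichotomy α 1 with ha1 | ha1 | ha1
  · -- α < 1 < β, points (α, β), weight l = (β-1)/(β-α), combo = 1
    have hden : (0:ℝ) < β - α := by linarith
    have hden2 : (0:ℝ) < β - 1 := by linarith
    have key := conv α β ((β - 1) / (β - α)) hα hβ
      (div_pos (by linarith) hden) (by rw [div_lt_one hden]; linarith)
    have hcomb : (β - 1) / (β - α) * α + (1 - (β - 1) / (β - α)) * β = 1 := by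
      field_simp; ring
    rw [hcomb, F1, Real.log_one, ← hx, ← hy] at key
    -- key : 0 ≤ (β-1)/(β-α) * x + (1 - (β-1)/(β-α)) * y
    have h1 : 1 - (β - 1) / (β - α) = (1 - α) / (β - α) := by field_simp; ring
    rw [h1] at key
    have key2 : 0 ≤ (β - 1) * x + (1 - α) * y := by
      have := mul_le_mul_of_nonneg_left key hden.le
      calc (0:ℝ) = (β - α) * 0 := by ring
        _ ≤ (β - α) * ((β - 1) / (β - α) * x + (1 - α) / (β - α) * y) := this
        _ = (β - 1) * x + (1 - α) * y := by field_simp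
    rw [inv_mul_eq_div, inv_mul_eq_div, show α - 1 = -(1 - α) by ring, div_neg, neg_le,
      ← neg_div, div_le_div_iff₀ hden2 (show (0:ℝ) < 1 - α by linarith)]
    linarith
  · exact absurd ha1 hα1
  · -- 1 < α < β, points (1, β), weight l = (β-α)/(β-1)
    have hden : (0:ℝ) < β - 1 := by linarith
    have key := conv 1 β ((β - α) / (β - 1)) one_pos hβ
      (div_pos (by linarith) hden) (by rw [div_lt_one hden]; linarith)
    have hcomb : (β - α) / (β - 1) * 1 + (1 - (β - α) / (β - 1)) * β = α := by
      field_simp; ring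
    have h1 : 1 - (β - α) / (β - 1) = (α - 1) / (β - 1) := by field_simp; ring
    rw [hcomb, F1, Real.log_one, mul_zero, zero_add, h1, ← hx, ← hy] at key
    -- key : x ≤ (α-1)/(β-1) * y ; goal : x/(α-1) ≤ y/(β-1)
    rw [inv_mul_eq_div, inv_mul_eq_div, div_le_div_iff₀ (by linarith : (0:ℝ) < α - 1) hden]
    rw [div_mul_eq_mul_div, le_div_iff₀ hden] at key
    linarith
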